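/- Let V be a free ℤ-module of finite rank and ψ : V × V → ℤ an alternating bilinear form such that ψ♭ : V → V* = Hom(V, ℤ), v ↦ ψ(v, −), is injective with finite cokernel of cardinality d², where d is a positive integer. Let ψ* be the unique bilinear form on V* with ψ*(ψ♭(v), ψ♭(w)) = d²·ψ(v, w) for all v, w ∈ V. Let x, y, z, w ∈ ℤ satisfy x² + y² + z² + w² = d² − 1, and let β ∈ M₄(ℤ) be the matrix with rows (x, −y, −z, −w), (y, x, −w, z), (z, w, x, −y), (w, −z, y, x); let β^T denote its transpose, acting on 4-tuples u = (u₁, u₂, u₃, u₄) ∈ V⁴ by (β^T u)_i = Σ_j (β^T)_{ij} u_j. Define a bilinear form ψ' on V' = V⁴ ⊕ (V*)⁴ by ψ'((u, f), (u', f')) = Σ_i ψ(u_i, u'_i) + Σ_i ψ*(f_i, f'_i) − Σ_i f'_i((β^T u)_i) + Σ_i f_i((β^T u')_i). Then ψ' is an alternating bilinear form on V' and it is perfect: the map V' → Hom(V', ℤ), ξ ↦ ψ'(ξ, −), is bijective. -/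

import Mathlib

open scoped BigOperators Matrix

set_option maxHeartbeats 1000000

/-- **Zarhin's trick.**  Let `V` be a finite free `ℤ`-module with an alternating form `ψ`
whose associated map `ψ♭ : V → V*` is injective with cokernel of cardinality `d²`, and let
`ψ*` be the unique bilinear form on `V*` with `ψ*(ψ♭v, ψ♭w) = d²·ψ(v, w)`.  Given integers
`x² + y² + z² + w² = d² − 1` and the quaternion matrix `β`, the form `ψ'` on
`V' = V⁴ ⊕ (V*)⁴` defined by
`ψ'((u,f),(u',f')) = Σ ψ(uᵢ,u'ᵢ) + Σ ψ*(fᵢ,f'ᵢ) − Σ f'ᵢ((βᵀu)ᵢ) + Σ fᵢ((βᵀu')ᵢ)`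
is an alternating bilinear form and it is perfect: `ξ ↦ ψ'(ξ, −)` is a bijection onto
`Hom(V', ℤ)`. -/
theorem zarhin_form_perfect_alternating
    (V : Type*) [AddCommGroup V] [Module ℤ V] [Module.Free ℤ V] [Module.Finite ℤ V]
    (ψ : V →ₗ[ℤ] V →ₗ[ℤ] ℤ) (halt : ∀ v, ψ v v = 0)
    (hinj : Function.Injective ψ)
    (d : ℕ) (hd : 0 < d)
    (hcoker : Nat.card ((V →ₗ[ℤ] ℤ) ⧸ LinearMap.range ψ) = d ^ 2)
    (ψs : (V →ₗ[ℤ] ℤ) →ₗ[ℤ] (V →ₗ[ℤ] ℤ) →ₗ[ℤ] ℤ)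
    (hψs : ∀ v w : V, ψs (ψ v) (ψ w) = (d : ℤ) ^ 2 * ψ v w)
    (x y z w : ℤ) (hxyzw : x ^ 2 + y ^ 2 + z ^ 2 + w ^ 2 = (d : ℤ) ^ 2 - 1)
    (β : Matrix (Fin 4) (Fin 4) ℤ)
    (hβ : β = !![x, -y, -z, -w; y, x, -w, z; z, w, x, -y; w, -z, y, x])
    (Ψ : ((Fin 4 → V) × (Fin 4 → (V →ₗ[ℤ] ℤ))) →
         ((Fin 4 → V) × (Fin 4 → (V →ₗ[ℤ] ℤ))) → ℤ)
    (hΨ : ∀ (u u' : Fin 4 → V) (f f' : Fin 4 → (V →ₗ[ℤ] ℤ)),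
      Ψ (u, f) (u', f') =
        (∑ i, ψ (u i) (u' i)) + (∑ i, ψs (f i) (f' i))
          - (∑ i, f' i (∑ j, β.transpose i j • u j))
          + (∑ i, f i (∑ j, β.transpose i j • u' j))) :
    (∀ a b c, Ψ (a + b) c = Ψ a c + Ψ b c) ∧
    (∀ a b c, Ψ c (a + b) = Ψ c a + Ψ c b) ∧
    (∀ a, Ψ a a = 0) ∧
    (∀ a, (∀ b, Ψ a b = 0) → a = 0) ∧
    (∀ φ : ((Fin 4 → V) × (Fin 4 → (V →ₗ[ℤ] ℤ))) →+ ℤ, ∃ a, ∀ b, Ψ a b = φ b) := by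
  classical
  have hd2 : ((d : ℤ) ^ 2) ≠ 0 := by positivity
  -- bridging lemmas for the ℤ-smul (which elaborates to `zsmul`)
  have hap : ∀ (c : ℤ) (F : V →ₗ[ℤ] ℤ) (v : V), (c • F) v = c * F v := fun _ _ _ => rfl
  have hfz : ∀ (F : V →ₗ[ℤ] ℤ) (c : ℤ) (v : V), F (c • v) = c * F v := by
    intro F c v
    rw [map_zsmul]
    rfl
  have hzaddV : ∀ (c : ℤ) (a b : V), c • (a + b) = c • a + c • b :=
    fun c a b => zsmul_add a b c
  have hzsubV : ∀ (c : ℤ) (a b : V), c • (a - b) = c • a - c • b := by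
    intro c a b
    rw [zsmul_sub]
  have hzsubD : ∀ (c : ℤ) (a b : V →ₗ[ℤ] ℤ), c • (a - b) = c • a - c • b := by
    intro c a b
    rw [zsmul_sub]
  have hsumV : ∀ (c : ℤ) (F : Fin 4 → V), c • (∑ i, F i) = ∑ i, c • F i :=
    fun c F => map_sum (zsmulAddGroupHom c) F Finset.univ
  have hsumD : ∀ (c : ℤ) (F : Fin 4 → (V →ₗ[ℤ] ℤ)), c • (∑ i, F i) = ∑ i, c • F i :=
    fun c F => map_sum (zsmulAddGroupHom c) F Finset.univ
  have hzzV : ∀ (a b : ℤ) (v : V), (a * b) • v = a • (b • v) := by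
    intro a b v
    rw [mul_zsmul]
  have hswV : ∀ (a b : ℤ) (v : V), a • (b • v) = b • (a • v) := by
    intro a b v
    rw [← mul_zsmul, mul_comm, mul_zsmul]
  have hswD : ∀ (a b : ℤ) (g : V →ₗ[ℤ] ℤ), a • (b • g) = b • (a • g) := by
    intro a b g
    rw [← mul_zsmul, mul_comm, mul_zsmul]
  have hcoefV : ∀ (s : Finset (Fin 4)) (c : Fin 4 → ℤ) (v : V),
      (∑ i ∈ s, c i) • v = ∑ i ∈ s, c i • v := fun s c v =>
    map_sum (AddMonoidHom.mk' (fun n : ℤ => n • v) (fun a b => add_zsmul v a b)) c s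
  -- skew-symmetry
  have hskew : ∀ a b : V, ψ a b = - ψ b a := by
    intro a b
    have h := halt (a + b)
    simp only [map_add, LinearMap.add_apply, halt] at h
    linarith
  -- the "inverse up to d²" map γ
  have hmem : ∀ ℓ : V →ₗ[ℤ] ℤ, ∃ v, ψ v = (d : ℤ) ^ 2 • ℓ := by
    intro ℓ
    have h0 : (Nat.card ((V →ₗ[ℤ] ℤ) ⧸ LinearMap.range ψ)) •
        ((LinearMap.range ψ).mkQ ℓ) = 0 := card_nsmul_eq_zero'
    rw [hcoker] at h0
    have h1 : (LinearMap.range ψ).mkQ (((d : ℤ) ^ 2) • ℓ) = 0 := by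
      rw [map_zsmul]
      have hc : ((d : ℤ) ^ 2) = ((d ^ 2 : ℕ) : ℤ) := by push_cast; ring
      rw [hc, natCast_zsmul, h0]
    rw [Submodule.mkQ_apply, Submodule.Quotient.mk_eq_zero] at h1
    exact h1
  choose γ hγ using hmem
  have hγ_eq : ∀ (ℓ : V →ₗ[ℤ] ℤ) (v : V), ψ v = (d : ℤ) ^ 2 • ℓ → γ ℓ = v :=
    fun ℓ v hv => hinj ((hγ ℓ).trans hv.symm)
  have hγ' : ∀ (ℓ : V →ₗ[ℤ] ℤ) (v : V), ψ (γ ℓ) v = (d : ℤ) ^ 2 * ℓ v := by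
    intro ℓ v
    rw [hγ ℓ]
    rfl
  -- ψs is minus evaluation at γ
  have key1 : ∀ g ℓ : V →ₗ[ℤ] ℤ, ψs g ℓ = - ℓ (γ g) := by
    intro g ℓ
    have h := hψs (γ g) (γ ℓ)
    have hL : ψs (ψ (γ g)) (ψ (γ ℓ)) = (d : ℤ) ^ 2 * ((d : ℤ) ^ 2 * ψs g ℓ) := by
      rw [hγ g, hγ ℓ, map_zsmul ψs]
      show (d : ℤ) ^ 2 * (ψs g ((d : ℤ) ^ 2 • ℓ)) = _
      rw [map_zsmul (ψs g)]
      rfl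
    have hR : ψ (γ g) (γ ℓ) = -((d : ℤ) ^ 2 * ℓ (γ g)) := by
      rw [hskew, hγ' ℓ (γ g)]
    rw [hL, hR] at h
    have h4 : (d : ℤ) ^ 2 * ((d : ℤ) ^ 2 * ψs g ℓ) =
        (d : ℤ) ^ 2 * ((d : ℤ) ^ 2 * (- ℓ (γ g))) := by linear_combination h
    exact mul_left_cancel₀ hd2 (mul_left_cancel₀ hd2 h4)
  have key2 : ∀ ℓ : V →ₗ[ℤ] ℤ, ℓ (γ ℓ) = 0 := by
    intro ℓ
    have h : ψ (γ ℓ) (γ ℓ) = 0 := halt _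
    rw [hγ' ℓ (γ ℓ)] at h
    exact (mul_eq_zero.mp h).resolve_left hd2
  -- quaternion matrix identities
  have hcol : ∀ j l : Fin 4, (∑ i, β.transpose i j * β.transpose i l) =
      if j = l then (d : ℤ) ^ 2 - 1 else 0 := by
    intro j l
    subst hβ
    fin_cases j <;> fin_cases l <;>
      simp [Fin.sum_univ_four, Matrix.transpose_apply] <;>
      linarith [hxyzw]
  have hrow : ∀ i l : Fin 4, (∑ j, β.transpose i j * β.transpose l j) =
      if i = l then (d : ℤ) ^ 2 - 1 else 0 := by
    intro i l
    subst hβ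
    fin_cases i <;> fin_cases l <;>
      simp [Fin.sum_univ_four, Matrix.transpose_apply] <;>
      linarith [hxyzw]
  -- dual separates points
  have hdualinj : ∀ m : V, (∀ ℓ : V →ₗ[ℤ] ℤ, ℓ m = 0) → m = 0 := by
    intro m hm
    apply (Module.evalEquiv ℤ V).injective
    rw [map_zero, Module.evalEquiv_apply]
    ext ℓ
    simpa using hm ℓ
  have mkLin : ∀ F : V →+ ℤ, ∃ G : V →ₗ[ℤ] ℤ, ∀ v, G v = F v := by
    intro F
    refine ⟨{ toFun := F, map_add' := F.map_add, map_smul' := ?_ }, fun v => rfl⟩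
    intro c v
    simp only [AddHom.toFun_eq_coe, AddHom.coe_mk, RingHom.id_apply]
    induction c using Int.induction_on with
    | zero =>
      have h2 := add_smul (0:ℤ) 0 v
      rw [add_zero] at h2
      rw [add_eq_left.mp h2.symm, map_zero]
      have h4 := add_smul (0:ℤ) 0 (F v)
      rw [add_zero] at h4
      rw [add_eq_left.mp h4.symm]
    | succ n ih => erw [add_smul, one_smul, F.map_add, ih, add_smul, one_smul]
    | pred n ih => erw [sub_smul, one_smul, F.map_sub, ih, sub_smul, one_smul]
  have mkLin2 : ∀ F : (V →ₗ[ℤ] ℤ) →+ ℤ,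
      ∃ G : Module.Dual ℤ (Module.Dual ℤ V), ∀ ℓ, G ℓ = F ℓ := by
    intro F
    refine ⟨{ toFun := F, map_add' := F.map_add, map_smul' := ?_ }, fun ℓ => rfl⟩
    intro c ℓ
    simp only [AddHom.toFun_eq_coe, AddHom.coe_mk, RingHom.id_apply]
    induction c using Int.induction_on with
    | zero =>
      have h2 := add_smul (0:ℤ) 0 ℓ
      rw [add_zero] at h2
      rw [add_eq_left.mp h2.symm, map_zero]
      have h4 := add_smul (0:ℤ) 0 (F ℓ)
      rw [add_zero] at h4
      rw [add_eq_left.mp h4.symm]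
    | succ n ih => erw [add_smul, one_smul, F.map_add, ih, add_smul, one_smul]
    | pred n ih => erw [sub_smul, one_smul, F.map_sub, ih, sub_smul, one_smul]
  refine ⟨?_, ?_, ?_, ?_, ?_⟩
  · rintro ⟨u1, f1⟩ ⟨u2, f2⟩ ⟨u3, f3⟩
    show Ψ (u1 + u2, f1 + f2) (u3, f3) = _
    rw [hΨ, hΨ, hΨ]
    simp only [Pi.add_apply, hzaddV, map_add, LinearMap.add_apply,
      Finset.sum_add_distrib]
    ring
  · rintro ⟨u1, f1⟩ ⟨u2, f2⟩ ⟨u3, f3⟩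
    show Ψ (u3, f3) (u1 + u2, f1 + f2) = _
    rw [hΨ, hΨ, hΨ]
    simp only [Pi.add_apply, hzaddV, map_add, LinearMap.add_apply,
      Finset.sum_add_distrib]
    ring
  · rintro ⟨u, f⟩
    rw [hΨ]
    have e1 : ∑ i, ψ (u i) (u i) = (0 : ℤ) := by simp [halt]
    have e2 : ∑ i, ψs (f i) (f i) = (0 : ℤ) := by
      refine Finset.sum_eq_zero fun i _ => ?_
      rw [key1, key2, neg_zero]
    rw [e1, e2]; ring
  · rintro ⟨u, f⟩ ha
    have hA : ∀ (j : Fin 4) (v : V),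
        ψ (u j) v + ∑ i, β.transpose i j * f i v = 0 := by
      intro j v
      have h := ha (Pi.single j v, 0)
      rw [hΨ] at h
      have t1 : ∑ i, ψ (u i) ((Pi.single j v : Fin 4 → V) i) = ψ (u j) v := by
        rw [Finset.sum_eq_single j]
        · rw [Pi.single_eq_same]
        · intro i _ hij; rw [Pi.single_eq_of_ne hij, map_zero]
        · intro hj; exact absurd (Finset.mem_univ j) hj
      have t4 : ∀ i : Fin 4,
          (∑ l, β.transpose i l • (Pi.single j v : Fin 4 → V) l) = β.transpose i j • v := by
        intro i
        rw [Finset.sum_eq_single j]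
        · rw [Pi.single_eq_same]
        · intro l _ hlj; rw [Pi.single_eq_of_ne hlj, zsmul_zero]
        · intro hj; exact absurd (Finset.mem_univ j) hj
      simp only [t1, t4, Pi.zero_apply, map_zero, LinearMap.zero_apply,
        Finset.sum_const_zero, hfz] at h
      linarith [h]
    have hB : ∀ (i : Fin 4) (ℓ : V →ₗ[ℤ] ℤ),
        ℓ (γ (f i) + ∑ j, β.transpose i j • u j) = 0 := by
      intro i ℓ
      have h := ha (0, Pi.single i ℓ)
      rw [hΨ] at h
      have t2 : ∑ k, ψs (f k) ((Pi.single i ℓ : Fin 4 → (V →ₗ[ℤ] ℤ)) k) = ψs (f i) ℓ := by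
        rw [Finset.sum_eq_single i]
        · rw [Pi.single_eq_same]
        · intro k _ hk; rw [Pi.single_eq_of_ne hk, map_zero]
        · intro hi; exact absurd (Finset.mem_univ i) hi
      have t3 : ∑ k, ((Pi.single i ℓ : Fin 4 → (V →ₗ[ℤ] ℤ)) k) (∑ j, β.transpose k j • u j)
          = ℓ (∑ j, β.transpose i j • u j) := by
        rw [Finset.sum_eq_single i]
        · rw [Pi.single_eq_same]
        · intro k _ hk; rw [Pi.single_eq_of_ne hk, LinearMap.zero_apply]
        · intro hi; exact absurd (Finset.mem_univ i) hi
      simp only [t2, t3, Pi.zero_apply, map_zero, zsmul_zero,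
        Finset.sum_const_zero] at h
      rw [key1] at h
      rw [map_add]
      linarith
    have hB' : ∀ i : Fin 4, γ (f i) = - ∑ j, β.transpose i j • u j := by
      intro i
      have h0 : γ (f i) + ∑ j, β.transpose i j • u j = 0 :=
        hdualinj _ (fun ℓ => hB i ℓ)
      exact eq_neg_of_add_eq_zero_left h0
    have hu0 : ∀ j, u j = 0 := by
      intro j
      have hAj : ψ (u j) + ∑ i, β.transpose i j • f i = 0 := by
        ext v
        simp only [LinearMap.add_apply, LinearMap.sum_apply, hap,
          LinearMap.zero_apply]
        exact hA j v
      have hcand : ψ ((d : ℤ) ^ 2 • u j + ∑ i, β.transpose i j • γ (f i)) = 0 := by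
        rw [map_add, map_zsmul, map_sum]
        simp only [map_zsmul, hγ]
        have hc : ∑ i, β.transpose i j • ((d : ℤ) ^ 2 • f i)
            = (d : ℤ) ^ 2 • ∑ i, β.transpose i j • f i := by
          rw [hsumD]
          exact Finset.sum_congr rfl fun i _ => hswD _ _ _
        rw [hc, ← zsmul_add ((ψ : V →ₗ[ℤ] V →ₗ[ℤ] ℤ) (u j)), hAj, zsmul_zero]
      have hz : (d : ℤ) ^ 2 • u j + ∑ i, β.transpose i j • γ (f i) = 0 :=
        hinj (by rw [hcand, map_zero])
      have hz2 : (d : ℤ) ^ 2 • u j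
          - ∑ i, β.transpose i j • ∑ l, β.transpose i l • u l = 0 := by
        have hrw : ∑ i, β.transpose i j • γ (f i)
            = - ∑ i, β.transpose i j • ∑ l, β.transpose i l • u l := by
          rw [← Finset.sum_neg_distrib]
          refine Finset.sum_congr rfl fun i _ => ?_
          rw [hB' i, zsmul_neg]
        rw [hrw] at hz
        rw [sub_eq_add_neg]
        exact hz
      have hdbl : ∑ i, β.transpose i j • ∑ l, β.transpose i l • u l
          = ∑ l, (∑ i, β.transpose i j * β.transpose i l) • u l := by
        simp only [hsumV]
        rw [Finset.sum_comm]
        refine Finset.sum_congr rfl fun l _ => ?_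
        rw [hcoefV]
        exact Finset.sum_congr rfl fun i _ => (hzzV _ _ _).symm
      rw [hdbl] at hz2
      have hsum : ∑ l, (∑ i, β.transpose i j * β.transpose i l) • u l
          = ((d : ℤ) ^ 2 - 1) • u j := by
        have hterm : ∀ l : Fin 4, (∑ i, β.transpose i j * β.transpose i l) • u l
            = if j = l then ((d : ℤ) ^ 2 - 1) • u l else 0 := by
          intro l
          rw [hcol j l]
          split_ifs with h
          · rfl
          · exact zero_zsmul _
        simp only [hterm]
        simp [Finset.sum_ite_eq]
      rw [hsum] at hz2
      have hfin : ((d : ℤ) ^ 2 - ((d : ℤ) ^ 2 - 1)) • u j = 0 := by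
        rw [sub_zsmul, ← sub_eq_add_neg]
        exact hz2
      rw [sub_sub_cancel, one_zsmul] at hfin
      exact hfin
    have hf0 : ∀ i, f i = 0 := by
      intro i
      have h1 : γ (f i) = 0 := by
        rw [hB' i]
        have : ∀ j : Fin 4, β.transpose i j • u j = 0 := fun j => by
          rw [hu0 j, zsmul_zero]
        simp only [this, Finset.sum_const_zero, neg_zero]
      have h2 : ((d : ℤ) ^ 2) • f i = 0 := by
        rw [← hγ (f i), h1, map_zero]
      ext v
      have h3 : (d : ℤ) ^ 2 * f i v = 0 := by
        have h4 := LinearMap.congr_fun h2 v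
        rw [hap] at h4
        simpa using h4
      have h5 := (mul_eq_zero.mp h3).resolve_left hd2
      simpa using h5
    have hu' : u = 0 := funext hu0
    have hf' : f = 0 := funext hf0
    simp [Prod.ext_iff, hu', hf']
  · intro φ
    have mk1 : ∀ j : Fin 4, ∃ g : V →ₗ[ℤ] ℤ, ∀ v, g v = φ (Pi.single j v, 0) := by
      intro j
      have hz1 : ((Pi.single j (0 : V) : Fin 4 → V), (0 : Fin 4 → V →ₗ[ℤ] ℤ))
          = (0 : (Fin 4 → V) × (Fin 4 → (V →ₗ[ℤ] ℤ))) := by simp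
      have hadd1 : ∀ a b : V,
          ((Pi.single j (a + b) : Fin 4 → V), (0 : Fin 4 → V →ₗ[ℤ] ℤ))
            = ((Pi.single j a : Fin 4 → V), (0 : Fin 4 → V →ₗ[ℤ] ℤ))
              + ((Pi.single j b : Fin 4 → V), (0 : Fin 4 → V →ₗ[ℤ] ℤ)) := by
        intro a b
        rw [Prod.mk_add_mk, Pi.single_add, add_zero]
      obtain ⟨G, hG⟩ := mkLin (φ.comp
        { toFun := fun v => ((Pi.single j v : Fin 4 → V), (0 : Fin 4 → V →ₗ[ℤ] ℤ))
          map_zero' := hz1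
          map_add' := hadd1 })
      exact ⟨G, fun v => hG v⟩
    have mk2 : ∀ i : Fin 4, ∃ k : V,
        ∀ ℓ : V →ₗ[ℤ] ℤ, ℓ k = - φ (0, Pi.single i ℓ) := by
      intro i
      have hz : ((0 : Fin 4 → V), (Pi.single i (0 : V →ₗ[ℤ] ℤ) : Fin 4 → (V →ₗ[ℤ] ℤ))) =
          (0 : (Fin 4 → V) × (Fin 4 → (V →ₗ[ℤ] ℤ))) := by simp
      have hadd : ∀ a b : V →ₗ[ℤ] ℤ,
          ((0 : Fin 4 → V), (Pi.single i (a + b) : Fin 4 → (V →ₗ[ℤ] ℤ)))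
            = ((0 : Fin 4 → V), (Pi.single i a : Fin 4 → (V →ₗ[ℤ] ℤ)))
              + ((0 : Fin 4 → V), (Pi.single i b : Fin 4 → (V →ₗ[ℤ] ℤ))) := by
        intro a b
        rw [Prod.mk_add_mk, Pi.single_add, add_zero]
      obtain ⟨H, hH⟩ := mkLin2 (φ.comp
        { toFun := fun ℓ : V →ₗ[ℤ] ℤ => ((0 : Fin 4 → V), (Pi.single i ℓ : Fin 4 → (V →ₗ[ℤ] ℤ)))
          map_zero' := hz
          map_add' := hadd })
      obtain ⟨k, hk⟩ := (Module.evalEquiv ℤ V).surjective (-H)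
      refine ⟨k, fun ℓ => ?_⟩
      have h2 : (Module.evalEquiv ℤ V k) ℓ = (-H) ℓ := by rw [hk]
      rw [Module.evalEquiv_apply] at h2
      have h3 : H ℓ = φ ((0 : Fin 4 → V), (Pi.single i ℓ : Fin 4 → (V →ₗ[ℤ] ℤ))) := hH ℓ
      rw [Module.Dual.eval_apply] at h2
      rw [h2, LinearMap.neg_apply, h3]
    choose g hg using mk1
    choose k hk using mk2
    obtain ⟨u, hu⟩ : ∃ u : Fin 4 → V,
        ∀ j, u j = γ (g j) - ∑ i, β.transpose i j • k i := ⟨_, fun j => rfl⟩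
    obtain ⟨f, hfd⟩ : ∃ f : Fin 4 → (V →ₗ[ℤ] ℤ),
        ∀ i, f i = ψ (k i) - ∑ j, β.transpose i j • g j := ⟨_, fun i => rfl⟩
    refine ⟨(u, f), ?_⟩
    rintro ⟨u', f'⟩
    rw [hΨ]
    -- first solving identity
    have hI : ∀ (j : Fin 4) (v : V),
        ψ (u j) v + ∑ i, β.transpose i j * f i v = g j v := by
      intro j v
      have hψu : ψ (u j) v = (d : ℤ) ^ 2 * g j v - ∑ i, β.transpose i j * ψ (k i) v := by
        rw [hu j, map_sub, map_sum]
        simp only [map_zsmul]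
        rw [LinearMap.sub_apply, LinearMap.sum_apply, hγ' (g j) v]
        simp only [hap]
      have hfv : ∀ i, f i v = ψ (k i) v - ∑ l, β.transpose i l * g l v := by
        intro i
        rw [hfd i, LinearMap.sub_apply, LinearMap.sum_apply]
        simp only [hap]
      have hdbl : ∑ i, β.transpose i j * ∑ l, β.transpose i l * g l v
          = ((d : ℤ) ^ 2 - 1) * g j v := by
        simp only [Finset.mul_sum]
        rw [Finset.sum_comm]
        have hgr : ∀ l, ∑ i, β.transpose i j * (β.transpose i l * g l v)
            = (∑ i, β.transpose i j * β.transpose i l) * g l v := by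
          intro l
          rw [Finset.sum_mul]
          exact Finset.sum_congr rfl fun i _ => (mul_assoc _ _ _).symm
        simp only [hgr, hcol]
        simp [ite_mul, zero_mul, Finset.sum_ite_eq]
      have hsf : ∑ i, β.transpose i j * f i v
          = ∑ i, β.transpose i j * ψ (k i) v - ((d : ℤ) ^ 2 - 1) * g j v := by
        rw [← hdbl, ← Finset.sum_sub_distrib]
        refine Finset.sum_congr rfl fun i _ => ?_
        rw [hfv i]
        ring
      rw [hψu, hsf]
      ring
    -- second solving identity
    have hγf : ∀ i, γ (f i) = (d : ℤ) ^ 2 • k i - ∑ j, β.transpose i j • γ (g j) := by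
      intro i
      apply hγ_eq
      rw [map_sub, map_zsmul, map_sum]
      simp only [map_zsmul, hγ]
      rw [hfd i, hzsubD, hsumD]
      congr 1
      exact Finset.sum_congr rfl fun jj _ => (hswD _ _ _).symm
    have hII : ∀ i, γ (f i) + ∑ j, β.transpose i j • u j = k i := by
      intro i
      have hdbl2 : ∑ j, β.transpose i j • (∑ l, β.transpose l j • k l)
          = ((d : ℤ) ^ 2 - 1) • k i := by
        simp only [hsumV, hzzV]
        rw [Finset.sum_comm]
        have hgr : ∀ l, ∑ j, β.transpose i j • β.transpose l j • k l
            = (∑ j, β.transpose i j * β.transpose l j) • k l := by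
          intro l
          rw [hcoefV]
          exact Finset.sum_congr rfl fun j _ => (hzzV _ _ _).symm
        rw [Finset.sum_congr rfl fun l _ => hgr l]
        have hterm : ∀ l : Fin 4, (∑ j, β.transpose i j * β.transpose l j) • k l
            = if i = l then ((d : ℤ) ^ 2 - 1) • k l else 0 := by
          intro l
          rw [hrow i l]
          split_ifs with h
          · rfl
          · exact zero_zsmul _
        simp only [hterm]
        simp [Finset.sum_ite_eq]
      have hsumu : ∑ j, β.transpose i j • u j
          = (∑ j, β.transpose i j • γ (g j)) - ((d : ℤ) ^ 2 - 1) • k i := by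
        rw [← hdbl2, ← Finset.sum_sub_distrib]
        refine Finset.sum_congr rfl fun j _ => ?_
        rw [hu j, hzsubV]
      rw [hγf i, hsumu, sub_add_sub_cancel]
      have hfin : ((d : ℤ) ^ 2 - ((d : ℤ) ^ 2 - 1)) • k i
          = (d : ℤ) ^ 2 • k i - ((d : ℤ) ^ 2 - 1) • k i := by
        rw [sub_zsmul, ← sub_eq_add_neg]
      rw [← hfin, sub_sub_cancel, one_zsmul]
    -- decompose φ
    have hφ2 : (φ (u', f') : ℤ) = (∑ j, g j (u' j)) - ∑ i, f' i (k i) := by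
      have hdecomp : ((u', f') : (Fin 4 → V) × (Fin 4 → (V →ₗ[ℤ] ℤ)))
          = (∑ j, ((Pi.single j (u' j) : Fin 4 → V), (0 : Fin 4 → V →ₗ[ℤ] ℤ)))
            + ∑ i, ((0 : Fin 4 → V), (Pi.single i (f' i) : Fin 4 → (V →ₗ[ℤ] ℤ))) := by
        rw [Prod.ext_iff]
        constructor
        · simp only [Prod.fst_add, Prod.fst_sum]
          simp [Finset.univ_sum_single]
        · simp only [Prod.snd_add, Prod.snd_sum]
          simp [Finset.univ_sum_single]
      rw [hdecomp, map_add, map_sum, map_sum]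
      have e1 : ∀ j : Fin 4,
          φ ((Pi.single j (u' j) : Fin 4 → V), (0 : Fin 4 → V →ₗ[ℤ] ℤ))
          = g j (u' j) := fun j => (hg j (u' j)).symm
      have e2 : ∀ i : Fin 4,
          φ ((0 : Fin 4 → V), (Pi.single i (f' i) : Fin 4 → (V →ₗ[ℤ] ℤ)))
          = - f' i (k i) := by
        intro i
        have h := hk i (f' i)
        linarith
      rw [Finset.sum_congr rfl fun j _ => e1 j, Finset.sum_congr rfl fun i _ => e2 i]
      rw [Finset.sum_neg_distrib]
      ring
    have hL1 : ∑ i, f i (∑ j, β.transpose i j • u' j)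
        = ∑ j, ∑ i, β.transpose i j * f i (u' j) := by
      simp only [map_sum, hfz]
      exact Finset.sum_comm
    have e1 : (∑ i, ψ (u i) (u' i)) + (∑ i, f i (∑ j, β.transpose i j • u' j))
        = ∑ j, g j (u' j) := by
      rw [hL1, ← Finset.sum_add_distrib]
      exact Finset.sum_congr rfl fun j _ => hI j (u' j)
    have e2 : (∑ i, ψs (f i) (f' i)) - (∑ i, f' i (∑ j, β.transpose i j • u j))
        = - ∑ i, f' i (k i) := by
      rw [← Finset.sum_sub_distrib, ← Finset.sum_neg_distrib]
      refine Finset.sum_congr rfl fun i _ => ?_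
      rw [key1]
      have h := congrArg (f' i) (hII i)
      rw [map_add] at h
      linarith
    rw [hφ2]
    linarith [e1, e2]
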